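/- For every positive integer m, the number of partitions of 2m into distinct odd parts equals the sum over i ≥ 0 of the number of partitions of m + 1 + i into exactly 2 + 2i distinct parts. -/

import Mathlib

/-- The n-th triangular number. -/
def T (n : ℕ) : ℕ := n * (n + 1) / 2

/-- A partition of `N` into distinct parts, represented as a finite set of
positive integers with at least two elements summing to `N`. -/
def DistinctPartition (N : ℕ) (S : Finset ℕ) : Prop :=
  (∀ x ∈ S, 0 < x) ∧ 2 ≤ S.card ∧ S.sum id = N

/-- The missing parts: integers in `{1, …, λ_t}` not appearing in the partition. -/
def Missing (S : Finset ℕ) : Finset ℕ := Finset.Icc 1 (S.sup id) \ S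

/-- No part is the sum of two distinct missing parts. -/
def Unrefinable (S : Finset ℕ) : Prop :=
  ∀ a ∈ Missing S, ∀ b ∈ Missing S, a ≠ b → a + b ∉ S

def UnrefinablePartition (N : ℕ) (S : Finset ℕ) : Prop :=
  DistinctPartition N S ∧ Unrefinable S

/-- A maximal unrefinable partition: its largest part is maximal among the
largest parts of all unrefinable partitions of `N`. -/
def MaximalUnrefinable (N : ℕ) (S : Finset ℕ) : Prop :=
  UnrefinablePartition N S ∧
    ∀ S' : Finset ℕ, UnrefinablePartition N S' → S'.sup id ≤ S.sup id

open Finset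

open Classical in
noncomputable def Fp (N : ℕ) (p : Finset ℕ → Prop) : Finset (Finset ℕ) :=
  (Finset.Icc 1 N).powerset.filter p

lemma set_eq_Fp (N : ℕ) (p : Finset ℕ → Prop)
    (hp : ∀ S, p S → (∀ x ∈ S, 0 < x) ∧ S.sum id = N) :
    {S : Finset ℕ | p S} = ↑(Fp N p) := by
  classical
  ext S
  simp only [Fp, Set.mem_setOf_eq, mem_coe, Finset.mem_filter, mem_powerset]
  constructor
  · intro h
    refine ⟨fun x hx => Finset.mem_Icc.2 ⟨(hp S h).1 x hx, ?_⟩, h⟩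
    calc x = id x := rfl
    _ ≤ S.sum id := Finset.single_le_sum (f := id) (fun i _ => Nat.zero_le _) hx
    _ = N := (hp S h).2
  · exact fun h => h.2

lemma ncard_eq_Fp (N : ℕ) (p : Finset ℕ → Prop)
    (hp : ∀ S, p S → (∀ x ∈ S, 0 < x) ∧ S.sum id = N) :
    {S : Finset ℕ | p S}.ncard = (Fp N p).card := by
  rw [set_eq_Fp N p hp, Set.ncard_coe_finset]

lemma mem_Fp (N : ℕ) (p : Finset ℕ → Prop)
    (hp : ∀ S, p S → (∀ x ∈ S, 0 < x) ∧ S.sum id = N) (S : Finset ℕ) :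
    S ∈ Fp N p ↔ p S := by
  have := Set.ext_iff.1 (set_eq_Fp N p hp) S
  simpa using this.symm

theorem count_odd_parts (m : ℕ) (hm : 1 ≤ m) :
    {S : Finset ℕ | DistinctPartition (2 * m) S ∧ ∀ x ∈ S, Odd x}.ncard =
      ∑' i : ℕ,
        {S : Finset ℕ | DistinctPartition (m + 1 + i) S ∧ S.card = 2 + 2 * i}.ncard := by
  classical
  -- abbreviations
  set Podd : Finset ℕ → Prop := fun S => DistinctPartition (2 * m) S ∧ ∀ x ∈ S, Odd x with hPodd
  have hpodd : ∀ S, Podd S → (∀ x ∈ S, 0 < x) ∧ S.sum id = 2 * m :=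
    fun S h => ⟨h.1.1, h.1.2.2⟩
  have hpB : ∀ i : ℕ, ∀ S, (DistinctPartition (m + 1 + i) S ∧ S.card = 2 + 2 * i) →
      (∀ x ∈ S, 0 < x) ∧ S.sum id = m + 1 + i :=
    fun i S h => ⟨h.1.1, h.1.2.2⟩
  have hpA : ∀ i : ℕ, ∀ S, (Podd S ∧ S.card = 2 + 2 * i) →
      (∀ x ∈ S, 0 < x) ∧ S.sum id = 2 * m :=
    fun i S h => ⟨h.1.1.1, h.1.1.2.2⟩
  -- evenness of cards in Podd
  have heven : ∀ S : Finset ℕ, Podd S → S.card % 2 = 0 := by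
    intro S hS
    have h1 : S.sum id % 2 = (∑ x ∈ S, id x % 2) % 2 := Finset.sum_nat_mod S 2 id
    have h2 : (∑ x ∈ S, id x % 2) = ∑ x ∈ S, 1 := by
      refine Finset.sum_congr rfl fun x hx => ?_
      obtain ⟨k, hk⟩ := hS.2 x hx
      simp [id, hk]
    rw [hS.1.2.2, h2, Finset.sum_const, smul_eq_mul, mul_one] at h1
    omega
  have hcard_le : ∀ (N : ℕ) (S : Finset ℕ), (∀ x ∈ S, 0 < x) → S.card ≤ S.sum id := by
    intro N S h
    calc S.card = ∑ _x ∈ S, 1 := (Finset.card_eq_sum_ones S)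
    _ ≤ S.sum id := Finset.sum_le_sum fun x hx => h x hx
  -- the key bijection
  have hbij : ∀ i : ℕ,
      (Fp (2 * m) (fun S => Podd S ∧ S.card = 2 + 2 * i)).card =
      (Fp (m + 1 + i) (fun S => DistinctPartition (m + 1 + i) S ∧ S.card = 2 + 2 * i)).card := by
    intro i
    refine Finset.card_bij' (fun S _ => S.image (fun y => (y + 1) / 2))
      (fun S _ => S.image (fun x => 2 * x - 1)) ?_ ?_ ?_ ?_
    · -- forward membership
      intro S hS
      rw [mem_Fp _ _ (hpA i)] at hS
      show S.image (fun y => (y + 1) / 2) ∈ Fp (m + 1 + i) _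
      rw [mem_Fp _ _ (hpB i)]
      obtain ⟨⟨⟨hpos, hcard2, hsum⟩, hodd⟩, hcard⟩ := hS
      have hinj : ∀ x ∈ S, ∀ y ∈ S, (x + 1) / 2 = (y + 1) / 2 → x = y := by
        intro x hx y hy hxy
        obtain ⟨a, ha⟩ := hodd x hx
        obtain ⟨b, hb⟩ := hodd y hy
        omega
      have hcardim : (S.image (fun y => (y + 1) / 2)).card = S.card :=
        Finset.card_image_of_injOn fun x hx y hy => hinj x hx y hy
      have hsumim : (S.image (fun y => (y + 1) / 2)).sum id = m + 1 + i := by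
        rw [Finset.sum_image hinj]
        have h2 : 2 * (∑ y ∈ S, (y + 1) / 2) = ∑ y ∈ S, (y + 1) := by
          rw [Finset.mul_sum]
          refine Finset.sum_congr rfl fun y hy => ?_
          obtain ⟨a, ha⟩ := hodd y hy
          omega
        have h3 : (∑ y ∈ S, (y + 1)) = S.sum id + S.card := by
          rw [Finset.sum_add_distrib, Finset.sum_const, smul_eq_mul, mul_one]
          rfl
        simp only [id] at *
        omega
      refine ⟨⟨?_, ?_, hsumim⟩, ?_⟩
      · intro z hz
        obtain ⟨y, hy, rfl⟩ := Finset.mem_image.1 hz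
        have := hpos y hy
        omega
      · omega
      · omega
    · -- backward membership
      intro S hS
      rw [mem_Fp _ _ (hpB i)] at hS
      show S.image (fun x => 2 * x - 1) ∈ Fp (2 * m) _
      rw [mem_Fp _ _ (hpA i)]
      obtain ⟨⟨hpos, hcard2, hsum⟩, hcard⟩ := hS
      have hinj : ∀ x ∈ S, ∀ y ∈ S, 2 * x - 1 = 2 * y - 1 → x = y := by
        intro x hx y hy h
        have := hpos x hx
        have := hpos y hy
        omega
      have hcardim : (S.image (fun x => 2 * x - 1)).card = S.card :=
        Finset.card_image_of_injOn fun x hx y hy => hinj x hx y hy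
      have hsumim : (S.image (fun x => 2 * x - 1)).sum id = 2 * m := by
        rw [Finset.sum_image hinj]
        have h2 : (∑ x ∈ S, (2 * x - 1)) + S.card = ∑ x ∈ S, 2 * x := by
          rw [Finset.card_eq_sum_ones, ← Finset.sum_add_distrib]
          refine Finset.sum_congr rfl fun x hx => ?_
          have := hpos x hx
          omega
        have h3 : (∑ x ∈ S, 2 * x) = 2 * S.sum id := by
          rw [Finset.mul_sum]; rfl
        simp only [id] at *
        omega
      refine ⟨⟨⟨?_, ?_, hsumim⟩, ?_⟩, ?_⟩
      · intro z hz
        obtain ⟨x, hx, rfl⟩ := Finset.mem_image.1 hz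
        have := hpos x hx
        omega
      · omega
      · intro z hz
        obtain ⟨x, hx, rfl⟩ := Finset.mem_image.1 hz
        have := hpos x hx
        exact ⟨x - 1, by omega⟩
      · omega
    · -- left inverse
      intro S hS
      rw [mem_Fp _ _ (hpA i)] at hS
      obtain ⟨⟨⟨hpos, hcard2, hsum⟩, hodd⟩, hcard⟩ := hS
      show (S.image (fun y => (y + 1) / 2)).image (fun x => 2 * x - 1) = S
      rw [Finset.image_image]
      have : S.image ((fun x => 2 * x - 1) ∘ (fun y => (y + 1) / 2)) = S.image id := by
        refine Finset.image_congr fun y hy => ?_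
        obtain ⟨a, ha⟩ := hodd y (by simpa using hy)
        simp [Function.comp]
        omega
      rw [this, Finset.image_id]
    · -- right inverse
      intro S hS
      rw [mem_Fp _ _ (hpB i)] at hS
      obtain ⟨⟨hpos, hcard2, hsum⟩, hcard⟩ := hS
      show (S.image (fun x => 2 * x - 1)).image (fun y => (y + 1) / 2) = S
      rw [Finset.image_image]
      have : S.image ((fun y => (y + 1) / 2) ∘ (fun x => 2 * x - 1)) = S.image id := by
        refine Finset.image_congr fun x hx => ?_
        have := hpos x (by simpa using hx)
        simp [Function.comp]
        omega
      rw [this, Finset.image_id]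
  -- decompose LHS by (card - 2)/2
  have hfib : (Fp (2 * m) Podd).card =
      ∑ i ∈ Finset.range m, (Fp (2 * m) (fun S => Podd S ∧ S.card = 2 + 2 * i)).card := by
    rw [Finset.card_eq_sum_card_fiberwise
      (f := fun S => (S.card - 2) / 2) (t := Finset.range m) ?_]
    · refine Finset.sum_congr rfl fun i _ => ?_
      congr 1
      ext S
      simp only [Fp, Finset.mem_filter, mem_powerset]
      constructor
      · rintro ⟨⟨hsub, hp⟩, hfi⟩
        have he := heven S hp
        have hc2 := hp.1.2.1
        exact ⟨hsub, hp, by omega⟩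
      · rintro ⟨hsub, hp, hc⟩
        exact ⟨⟨hsub, hp⟩, by omega⟩
    · intro S hS
      rw [Finset.mem_coe, mem_Fp _ _ hpodd] at hS
      have he := heven S hS
      have hc2 := hS.1.2.1
      have hle := hcard_le (2 * m) S hS.1.1
      rw [hS.1.2.2] at hle
      rw [Finset.mem_coe, Finset.mem_range]
      show (S.card - 2) / 2 < m
      omega
  -- RHS: tsum is a finite sum
  have hzero : ∀ i : ℕ, i ∉ Finset.range m →
      {S : Finset ℕ | DistinctPartition (m + 1 + i) S ∧ S.card = 2 + 2 * i}.ncard = 0 := by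
    intro i hi
    rw [Finset.mem_range, not_lt] at hi
    have : {S : Finset ℕ | DistinctPartition (m + 1 + i) S ∧ S.card = 2 + 2 * i} = ∅ := by
      ext S
      simp only [Set.mem_setOf_eq, Set.mem_empty_iff_false, iff_false]
      rintro ⟨⟨hpos, hc2, hsum⟩, hc⟩
      have hle := hcard_le (m + 1 + i) S hpos
      rw [hsum] at hle
      omega
    rw [this, Set.ncard_empty]
  rw [tsum_eq_sum (s := Finset.range m) hzero]
  rw [ncard_eq_Fp (2 * m) Podd hpodd, hfib]
  refine Finset.sum_congr rfl fun i _ => ?_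
  rw [ncard_eq_Fp (m + 1 + i) _ (hpB i), ← hbij i]
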